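/- Let G be a compact group acting linearly on a finite-dimensional real representation V and let x ∈ V with averaged point x₀ = ∫_G g·x dg. Then x₀ is the unique G-fixed point contained in conv(G·x), and x₀ lies in the relative interior of conv(G·x). -/

import Mathlib

open MeasureTheory

section auxlemmas
open Set

theorem aux_isCompact_convexHull {V : Type*} [NormedAddCommGroup V] [NormedSpace ℝ V]
    [FiniteDimensional ℝ V] {s : Set V} (hs : IsCompact s) :
    IsCompact (convexHull ℝ s) := by
  classical
  rcases s.eq_empty_or_nonempty with rfl | ⟨p, hp⟩
  · simp
  set d := Module.finrank ℝ V + 1 with hd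
  have key : convexHull ℝ s = (fun q : (Fin d → ℝ) × (Fin d → V) => ∑ i, q.1 i • q.2 i) ''
      (stdSimplex ℝ (Fin d) ×ˢ Set.univ.pi fun _ => s) := by
    apply Subset.antisymm
    · intro x hx
      obtain ⟨ι, hfin, z, w, hzs, hAI, hwpos, hwsum, hx⟩ :=
        eq_pos_convex_span_of_mem_convexHull hx
      have hne : Nonempty ι := by
        by_contra hne
        rw [not_nonempty_iff] at hne
        rw [Finset.univ_eq_empty, Finset.sum_empty] at hwsum
        exact one_ne_zero hwsum.symm
      have hcard : Fintype.card ι ≤ d := by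
        have := hAI.finrank_vectorSpan_add_one
        rw [hd, ← this]
        exact Nat.add_le_add_right (Submodule.finrank_le _) 1
      let e := Fintype.equivFin ι
      let emb : ι ↪ Fin d := ⟨fun i => Fin.castLE hcard (e i),
        fun a b hab => e.injective (Fin.castLE_injective hcard hab)⟩
      have hnotmem : ∀ j : Fin d, j ∉ Finset.univ.map emb → ¬∃ i, emb i = j := by
        rintro j hj ⟨i, rfl⟩
        exact hj (Finset.mem_map_of_mem _ (Finset.mem_univ i))
      refine ⟨⟨Function.extend (⇑emb) w (fun _ => (0:ℝ)), Function.extend (⇑emb) z fun _ => p⟩,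
        ⟨⟨?_, ?_⟩, ?_⟩, ?_⟩
      · intro j
        show 0 ≤ Function.extend (⇑emb) w (fun _ => (0:ℝ)) j
        by_cases hj : ∃ i, emb i = j
        · obtain ⟨i, rfl⟩ := hj
          rw [emb.injective.extend_apply w (fun _ => (0:ℝ)) i]
          exact (hwpos i).le
        · rw [Function.extend_apply' w (fun _ => (0:ℝ)) _ hj]
      · show ∑ j, Function.extend (⇑emb) w (fun _ => (0:ℝ)) j = 1
        rw [← Finset.sum_subset (Finset.subset_univ (Finset.univ.map emb))
          (fun j _ hj => Function.extend_apply' w (fun _ => (0:ℝ)) _ (hnotmem j hj)),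
          Finset.sum_map]
        simp only [Function.Embedding.coeFn_mk, emb.injective.extend_apply]
        exact hwsum
      · intro j _
        show Function.extend (⇑emb) z (fun _ => p) j ∈ s
        by_cases hj : ∃ i, emb i = j
        · obtain ⟨i, rfl⟩ := hj
          rw [emb.injective.extend_apply z _ i]
          exact hzs (mem_range_self i)
        · rw [Function.extend_apply' z _ _ hj]; exact hp
      · show ∑ j, Function.extend (⇑emb) w (fun _ => (0:ℝ)) j • Function.extend (⇑emb) z (fun _ => p) j = x
        rw [← Finset.sum_subset (Finset.subset_univ (Finset.univ.map emb))
          (fun j _ hj => by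
            rw [Function.extend_apply' w (fun _ => (0:ℝ)) _ (hnotmem j hj)]
            simp), Finset.sum_map]
        simp only [Function.Embedding.coeFn_mk, emb.injective.extend_apply]
        exact hx
    · rintro x ⟨⟨w, z⟩, ⟨hw, hz⟩, rfl⟩
      exact (convex_convexHull ℝ s).sum_mem (fun i _ => hw.1 i) hw.2
        (fun i _ => subset_convexHull ℝ s (hz i (Set.mem_univ i)))
  rw [key]
  exact (IsCompact.prod (isCompact_stdSimplex (𝕜 := ℝ) (ι := Fin d)) (isCompact_univ_pi fun _ => hs)).image (by fun_prop)

theorem aux_zero_mem_intrinsicInterior {V : Type*} [NormedAddCommGroup V] [NormedSpace ℝ V]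
    [FiniteDimensional ℝ V] {s : Set V} (hs : Convex ℝ s) (h0 : (0:V) ∈ s)
    (H : ∀ f : V →L[ℝ] ℝ, (∀ y ∈ s, f y ≤ 0) → ∀ y ∈ s, f y = 0) :
    (0:V) ∈ intrinsicInterior ℝ s := by
  classical
  set W : Submodule ℝ V := Submodule.span ℝ s with hW
  have hsW : s ⊆ (W : Set V) := Submodule.subset_span
  set s' : Set W := (Subtype.val) ⁻¹' s with hs'
  have h0W : (0:V) ∈ W := W.zero_mem
  have h0' : (0 : W) ∈ s' := h0
  have hconv' : Convex ℝ s' := hs.linear_preimage W.subtype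
  have hspan' : Submodule.span ℝ s' = ⊤ := by
    apply Submodule.map_injective_of_injective W.injective_subtype
    rw [Submodule.map_span, Submodule.map_top, Submodule.range_subtype]
    have : W.subtype '' s' = s := by
      show Subtype.val '' (Subtype.val ⁻¹' s) = s
      apply Set.image_preimage_eq_of_subset
      rwa [Subtype.range_val]
    rw [this, hW]
  have haff' : affineSpan ℝ s' = ⊤ := by
    rw [eq_top_iff]
    intro z _
    have hz : z ∈ Submodule.span ℝ s' := by rw [hspan']; trivial
    have hdir : Submodule.span ℝ s' ≤ (affineSpan ℝ s').direction := by
      rw [direction_affineSpan]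
      apply Submodule.span_le.2
      intro y hy
      have h1 : y - 0 ∈ s' -ᵥ s' := Set.vsub_mem_vsub hy h0'
      have h2 : y ∈ s' -ᵥ s' := by simpa using h1
      rw [SetLike.mem_coe, vectorSpan_def]
      exact Submodule.subset_span h2
    have := AffineSubspace.vadd_mem_of_mem_direction (hdir hz) (subset_affineSpan ℝ _ h0')
    simpa using this
  have hintne : (interior s').Nonempty :=
    hconv'.interior_nonempty_iff_affineSpan_eq_top.mpr haff'
  obtain ⟨a, ha⟩ := hintne
  have h0int : (0 : W) ∈ interior s' := by
    by_contra h0i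
    obtain ⟨f, hf⟩ := geometric_hahn_banach_open_point (hconv'.interior) isOpen_interior h0i
    have hfneg : ∀ b ∈ interior s', f b < 0 := by
      intro b hb
      simpa using hf b hb
    have hle : ∀ y ∈ s', f y ≤ 0 := by
      intro y hy
      have hseq : ∀ n : ℕ, y + ((1:ℝ)/(n+1)) • (a - y) ∈ interior s' := fun n =>
        hconv'.add_smul_sub_mem_interior hy ha
          ⟨by positivity, by rw [div_le_one (by positivity)]; linarith [Nat.cast_nonneg (α := ℝ) n]⟩
      have htend : Filter.Tendsto (fun n : ℕ => f (y + ((1:ℝ)/(n+1)) • (a - y)))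
          Filter.atTop (nhds (f y)) := by
        have h1 : Filter.Tendsto (fun n : ℕ => (1:ℝ)/(n+1)) Filter.atTop (nhds 0) :=
          tendsto_one_div_add_atTop_nhds_zero_nat
        have h2 : Filter.Tendsto (fun n : ℕ => y + ((1:ℝ)/(n+1)) • (a - y))
            Filter.atTop (nhds (y + (0:ℝ) • (a - y))) :=
          Filter.Tendsto.add tendsto_const_nhds (h1.smul tendsto_const_nhds)
        rw [zero_smul, add_zero] at h2
        exact (f.continuous.tendsto y).comp h2
      exact le_of_tendsto htend (Filter.Eventually.of_forall fun n => (hfneg _ (hseq n)).le)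
    obtain ⟨F, hF, -⟩ := exists_extension_norm_eq W f
    have hFle : ∀ y ∈ s, F y ≤ 0 := by
      intro y hy
      have h2 := hle ⟨y, hsW hy⟩ hy
      exact le_trans (le_of_eq (hF ⟨y, hsW hy⟩)) h2
    have hFeq := H F hFle
    have h1 : F (a : V) = 0 := hFeq (a : V) (show (a:V) ∈ s from interior_subset (s := s') ha)
    rw [hF a] at h1
    exact absurd h1 (ne_of_lt (hfneg a ha))
  -- transfer to intrinsicInterior
  have hAset : (affineSpan ℝ s : Set V) = (W : Set V) := by
    apply Subset.antisymm
    · have hle : affineSpan ℝ s ≤ W.toAffineSubspace := by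
        apply affineSpan_le.2
        intro y hy
        exact (Submodule.mem_toAffineSubspace).2 (hsW hy)
      exact fun z hz => (Submodule.mem_toAffineSubspace).1 (hle hz)
    · intro z hz
      have hdir : W ≤ (affineSpan ℝ s).direction := by
        rw [direction_affineSpan, hW]
        apply Submodule.span_le.2
        intro y hy
        have h2 : y ∈ s -ᵥ s := ⟨y, hy, 0, h0, by simp⟩
        rw [SetLike.mem_coe, vectorSpan_def]
        exact Submodule.subset_span h2
      have := AffineSubspace.vadd_mem_of_mem_direction (hdir hz)
        (subset_affineSpan ℝ s h0)
      simpa using this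
  have hmem : ∀ z : V, z ∈ affineSpan ℝ s ↔ z ∈ W := by
    intro z
    rw [← SetLike.mem_coe, ← SetLike.mem_coe (p := W), hAset]
  let e : W ≃ₜ affineSpan ℝ s :=
    { toFun := fun w => ⟨w.1, (hmem w.1).2 w.2⟩
      invFun := fun z => ⟨z.1, (hmem z.1).1 z.2⟩
      left_inv := fun _ => rfl
      right_inv := fun _ => rfl
      continuous_toFun := Continuous.subtype_mk continuous_subtype_val _
      continuous_invFun := Continuous.subtype_mk continuous_subtype_val _ }
  rw [mem_intrinsicInterior]
  refine ⟨⟨0, subset_affineSpan ℝ s h0⟩, ?_, rfl⟩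
  have himage : ((↑) ⁻¹' s : Set (affineSpan ℝ s)) = e '' s' := by
    ext z
    constructor
    · intro hz; exact ⟨e.symm z, hz, rfl⟩
    · rintro ⟨w, hw, rfl⟩; exact hw
  rw [himage, ← Homeomorph.image_interior]
  exact ⟨⟨0, h0W⟩, h0int, rfl⟩


theorem aux_mem_intrinsicInterior {V : Type*} [NormedAddCommGroup V] [NormedSpace ℝ V]
    [FiniteDimensional ℝ V] {s : Set V} (hs : Convex ℝ s) {x : V} (hx : x ∈ s)
    (H : ∀ f : V →L[ℝ] ℝ, (∀ y ∈ s, f y ≤ f x) → ∀ y ∈ s, f y = f x) :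
    x ∈ intrinsicInterior ℝ s := by
  let φ : V ≃ᵃⁱ[ℝ] V := AffineIsometryEquiv.constVAdd ℝ V (-x)
  have hφ : ∀ y, φ.toAffineIsometry y = -x + y := fun y => rfl
  have himg := AffineIsometry.image_intrinsicInterior (𝕜 := ℝ) φ.toAffineIsometry s
  have himset : φ.toAffineIsometry '' s = (fun y => -x + y) '' s := by
    ext z; simp [hφ]
  have h0 : (0:V) ∈ intrinsicInterior ℝ (φ.toAffineIsometry '' s) := by
    rw [himset]
    apply aux_zero_mem_intrinsicInterior
    · exact hs.translate (-x)
    · exact ⟨x, hx, by simp⟩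
    · intro f hf y hy
      obtain ⟨y', hy', rfl⟩ := hy
      have hfle : ∀ z ∈ s, f z ≤ f x := by
        intro z hz
        have h1 := hf (-x + z) ⟨z, hz, rfl⟩
        rw [map_add, map_neg] at h1
        linarith
      have h2 := H f hfle y' hy'
      rw [map_add, map_neg, h2]
      ring
  rw [himg] at h0
  obtain ⟨z, hz, hz0⟩ := h0
  have hzx : z = x := by
    have h3 : -x + z = 0 := hz0
    have := neg_add_eq_zero.mp h3
    exact this.symm
  rwa [← hzx]

end auxlemmas



/-- For a compact group `G` acting linearly on a finite-dimensional real representation `V`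
and `x ∈ V`, the averaged point `x₀ = ∫_G g·x dg` is the unique `G`-fixed point of
`conv(G·x)`, and it lies in the relative interior of `conv(G·x)`. -/
theorem stmt_2 {G V : Type*} [Group G] [TopologicalSpace G] [IsTopologicalGroup G]
    [CompactSpace G] [MeasurableSpace G] [BorelSpace G]
    [NormedAddCommGroup V] [NormedSpace ℝ V] [FiniteDimensional ℝ V]
    (μ : Measure G) [μ.IsHaarMeasure] [IsProbabilityMeasure μ]
    (ρ : Representation ℝ G V) (hρ : ∀ v : V, Continuous fun g => ρ g v)
    (x : V) (x₀ : V) (hx₀ : x₀ = ∫ g, ρ g x ∂μ) :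
    x₀ ∈ convexHull ℝ (Set.range fun g => ρ g x) ∧
    (∀ g : G, ρ g x₀ = x₀) ∧
    (∀ y ∈ convexHull ℝ (Set.range fun g => ρ g x), (∀ g : G, ρ g y = y) → y = x₀) ∧
    x₀ ∈ intrinsicInterior ℝ (convexHull ℝ (Set.range fun g => ρ g x)) := by
  have hrinv : μ.IsMulRightInvariant := by
    constructor
    intro h
    have : IsProbabilityMeasure (Measure.map (· * h) μ) :=
      Measure.isProbabilityMeasure_map (measurable_mul_const h).aemeasurable
    exact Measure.isHaarMeasure_eq_of_isProbabilityMeasure _ μ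
  have hint : ∀ v : V, Integrable (fun g => ρ g v) μ := fun v =>
    (hρ v).integrable_of_hasCompactSupport ((isClosed_tsupport _).isCompact)
  -- part 1
  have hKcomp : IsCompact (convexHull ℝ (Set.range fun g => ρ g x)) :=
    aux_isCompact_convexHull (isCompact_range (hρ x))
  have part1 : x₀ ∈ convexHull ℝ (Set.range fun g => ρ g x) := by
    rw [hx₀]
    exact (convex_convexHull ℝ _).integral_mem hKcomp.isClosed
      (Filter.Eventually.of_forall fun g =>
        subset_convexHull ℝ _ (Set.mem_range_self g)) (hint x)
  -- part 2
  have part2 : ∀ h : G, ρ h x₀ = x₀ := by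
    intro h
    rw [hx₀]
    have hL := (LinearMap.toContinuousLinearMap (ρ h)).integral_comp_comm (hint x)
    have h1 : ρ h (∫ g, ρ g x ∂μ) = ∫ g, ρ h (ρ g x) ∂μ := hL.symm
    rw [h1]
    have h2 : (fun g => ρ h (ρ g x)) = fun g => ρ (h * g) x := by
      funext g; rw [map_mul]; rfl
    rw [h2]
    exact integral_mul_left_eq_self (fun g => ρ g x) h
  -- averaging map is constant on the orbit
  have hTorbit : ∀ h : G, (∫ g, ρ g (ρ h x) ∂μ) = x₀ := by
    intro h
    have h2 : (fun g => ρ g (ρ h x)) = fun g => ρ (g * h) x := by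
      funext g; rw [map_mul]; rfl
    rw [h2, integral_mul_right_eq_self (fun g => ρ g x) h, hx₀]
  -- part 3
  have part3 : ∀ y ∈ convexHull ℝ (Set.range fun g => ρ g x),
      (∀ g : G, ρ g y = y) → y = x₀ := by
    intro y hy hfix
    have hTlin : IsLinearMap ℝ (fun v => ∫ g, ρ g v ∂μ) := by
      constructor
      · intro u v
        simp only [map_add]
        exact integral_add (hint u) (hint v)
      · intro c v
        simp only [_root_.map_smul]
        exact integral_smul c _
    have hTy : (∫ g, ρ g y ∂μ) = y := by
      have : (fun g => ρ g y) = fun _ => y := funext hfix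
      rw [this, integral_const, probReal_univ, one_smul]
    have himg := hTlin.image_convexHull (Set.range fun g => ρ g x)
    have hmem : (∫ g, ρ g y ∂μ) ∈
        (fun v => ∫ g, ρ g v ∂μ) '' convexHull ℝ (Set.range fun g => ρ g x) :=
      Set.mem_image_of_mem _ hy
    rw [himg] at hmem
    have hrange : (fun v => ∫ g, ρ g v ∂μ) '' (Set.range fun g => ρ g x) = {x₀} := by
      apply Set.Subset.antisymm
      · rintro z ⟨w, ⟨h, hw⟩, hz⟩
        subst hw
        rw [Set.mem_singleton_iff, ← hz]
        exact hTorbit h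
      · intro z hz
        rw [Set.mem_singleton_iff] at hz
        exact ⟨ρ 1 x, ⟨1, rfl⟩, (hTorbit 1).trans hz.symm⟩
    rw [hrange, convexHull_singleton] at hmem
    rw [← hTy]
    exact hmem
  refine ⟨part1, part2, part3, ?_⟩
  -- part 4
  apply aux_mem_intrinsicInterior (convex_convexHull ℝ _) part1
  intro f hf
  have h1 : ∀ g : G, f (ρ g x) ≤ f x₀ := fun g =>
    hf _ (subset_convexHull ℝ _ (Set.mem_range_self g))
  have h2 : ∫ g, f (ρ g x) ∂μ = f x₀ := by
    rw [hx₀]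
    exact f.integral_comp_comm (hint x)
  have hfint : Integrable (fun g => f (ρ g x)) μ :=
    (f.continuous.comp (hρ x)).integrable_of_hasCompactSupport
      ((isClosed_tsupport _).isCompact)
  have hzero : (fun g => f x₀ - f (ρ g x)) = fun _ => (0:ℝ) := by
    have hi : Integrable (fun g => f x₀ - f (ρ g x)) μ := (integrable_const _).sub hfint
    have hiz : ∫ g, (f x₀ - f (ρ g x)) ∂μ = 0 := by
      rw [integral_sub (integrable_const _) hfint, h2, integral_const, probReal_univ,
        smul_eq_mul, one_mul, sub_self]
    have hae := (integral_eq_zero_iff_of_nonneg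
      (fun g => sub_nonneg.2 (h1 g)) hi).1 hiz
    exact (Continuous.ae_eq_iff_eq μ (by fun_prop) continuous_const).1 hae
  have horb : ∀ g : G, f (ρ g x) = f x₀ := by
    intro g
    have h3 := congrFun hzero g
    exact (sub_eq_zero.mp h3).symm
  intro y hy
  have hsub : convexHull ℝ (Set.range fun g => ρ g x) ⊆ {w | f w = f x₀} := by
    apply convexHull_min
    · rintro - ⟨g, rfl⟩
      exact horb g
    · exact convex_hyperplane f.toLinearMap.isLinear (f x₀)
  exact hsub hy
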